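/- Let 0 ≤ b₁ < d₁ ≤ b₂ < d₂, φ(x) := exp(−x²/2), m̂₁ := ∫_{b₁}^{d₁} φ(x) dx and m̂₂ := ∫_{b₂}^{d₂} φ(x) dx. Then ∫_{b₁}^{d₁} φ(z) ( ∫_0^{z + d₂} ( ∫_{max(b₂, y − z)}^{d₂} φ(x) dx ) dy ) dz = m̂₁ ( φ(b₂) − φ(d₂) ) + m̂₂ ( φ(b₁) − φ(d₁) ). -/

import Mathlib

open MeasureTheory Real

/-- `φ(x) = exp(−x²/2)`. -/
noncomputable def phi (x : ℝ) : ℝ := Real.exp (-(x ^ 2 / 2))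

lemma phi_cont : Continuous phi := by
  unfold phi; continuity

lemma hasDerivAt_phi (u : ℝ) : HasDerivAt phi (-u * phi u) u := by
  have h : HasDerivAt (fun u : ℝ => -(u ^ 2 / 2)) (-u) u := by
    have : HasDerivAt (fun x : ℝ => -(x ^ 2 / 2)) (-(↑2 * u ^ (2 - 1) / 2)) u :=
      ((hasDerivAt_pow 2 u).div_const 2).neg
    convert this using 1
    ring
  have h2 := h.exp
  unfold phi
  convert h2 using 1
  ring

lemma hasDerivAt_F (d₂ u : ℝ) :
    HasDerivAt (fun u => ∫ x in u..d₂, phi x) (-phi u) u := by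
  have h : HasDerivAt (fun u => ∫ x in d₂..u, phi x) (phi u) u :=
    intervalIntegral.integral_hasDerivAt_right
      (phi_cont.intervalIntegrable _ _)
      (phi_cont.stronglyMeasurableAtFilter _ _)
      phi_cont.continuousAt
  have : HasDerivAt (fun u => -∫ x in d₂..u, phi x) (-phi u) u := h.neg
  convert this using 1
  ext x
  rw [intervalIntegral.integral_symm]

lemma F_cont (d₂ : ℝ) : Continuous (fun u => ∫ x in u..d₂, phi x) :=
  continuous_iff_continuousAt.2 fun u => (hasDerivAt_F d₂ u).continuousAt

lemma C_val (b₂ d₂ : ℝ) :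
    (∫ u in b₂..d₂, ∫ x in u..d₂, phi x)
      = phi b₂ - phi d₂ - b₂ * ∫ x in b₂..d₂, phi x := by
  have hG : ∀ u ∈ Set.uIcc b₂ d₂,
      HasDerivAt (fun u => u * (∫ x in u..d₂, phi x) - phi u)
        (∫ x in u..d₂, phi x) u := by
    intro u _
    have h1 := (hasDerivAt_id u).mul (hasDerivAt_F d₂ u)
    have : HasDerivAt (fun x => x * (∫ t in x..d₂, phi t) - phi x)
        ((1 * ∫ x in u..d₂, phi x) + id u * -phi u - -u * phi u) u := h1.sub (hasDerivAt_phi u)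
    convert this using 1
    simp only [id_eq]
    ring
  have := intervalIntegral.integral_eq_sub_of_hasDerivAt hG
    ((F_cont d₂).intervalIntegrable _ _)
  rw [this]
  simp [intervalIntegral.integral_same]
  ring

lemma middle (b₂ d₂ z : ℝ) (hz : 0 ≤ z) (hb₂ : 0 ≤ b₂) (hbd : b₂ ≤ d₂) :
    (∫ y in (0:ℝ)..(z + d₂), ∫ x in (max b₂ (y - z))..d₂, phi x)
      = (b₂ + z) * (∫ x in b₂..d₂, phi x)
        + (∫ u in b₂..d₂, ∫ x in u..d₂, phi x) := by
  have hcont : Continuous (fun y => ∫ x in (max b₂ (y - z))..d₂, phi x) :=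
    (F_cont d₂).comp (continuous_const.max (continuous_id.sub continuous_const))
  have hsplit := intervalIntegral.integral_add_adjacent_intervals
    (a := (0:ℝ)) (b := z + b₂) (c := z + d₂)
    (hcont.intervalIntegrable (μ := volume) _ _) (hcont.intervalIntegrable (μ := volume) _ _)
  rw [← hsplit]
  have h1 : (∫ y in (0:ℝ)..(z + b₂), ∫ x in (max b₂ (y - z))..d₂, phi x)
      = (z + b₂) * ∫ x in b₂..d₂, phi x := by
    rw [intervalIntegral.integral_congr (g := fun _ => ∫ x in b₂..d₂, phi x)]
    · simp
    · intro y hy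
      rw [Set.uIcc_of_le (by linarith)] at hy
      have : y - z ≤ b₂ := by
        have := hy.2; linarith
      simp [max_eq_left this]
  have h2 : (∫ y in (z + b₂)..(z + d₂), ∫ x in (max b₂ (y - z))..d₂, phi x)
      = ∫ u in b₂..d₂, ∫ x in u..d₂, phi x := by
    rw [intervalIntegral.integral_congr
        (g := fun y => ∫ x in (y - z)..d₂, phi x)]
    · rw [intervalIntegral.integral_comp_sub_right (fun u => ∫ x in u..d₂, phi x) z]
      norm_num
    · intro y hy
      rw [Set.uIcc_of_le (by linarith)] at hy
      have : b₂ ≤ y - z := by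
        have := hy.1; linarith
      simp [max_eq_right this]
  rw [h1, h2]
  ring

/-- the exact triple-integral identity
`∫_{b₁}^{d₁} φ(z) (∫_0^{z+d₂} (∫_{max(b₂,y−z)}^{d₂} φ(x) dx) dy) dz
   = m̂₁(φ(b₂) − φ(d₂)) + m̂₂(φ(b₁) − φ(d₁))`. -/
theorem triple_integral_identity_two_strips (b₁ d₁ b₂ d₂ : ℝ)
    (hb₁ : 0 ≤ b₁) (h₁ : b₁ < d₁) (h₁₂ : d₁ ≤ b₂) (h₂ : b₂ < d₂) :
    (∫ z in b₁..d₁, phi z * ∫ y in (0:ℝ)..(z + d₂), ∫ x in (max b₂ (y - z))..d₂, phi x)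
      = (∫ x in b₁..d₁, phi x) * (phi b₂ - phi d₂)
        + (∫ x in b₂..d₂, phi x) * (phi b₁ - phi d₁) := by
  set m₂ := ∫ x in b₂..d₂, phi x with hm₂
  set C := ∫ u in b₂..d₂, ∫ x in u..d₂, phi x with hC
  have hb₂ : 0 ≤ b₂ := le_trans hb₁ (le_trans h₁.le h₁₂)
  have key : (∫ z in b₁..d₁, phi z * ∫ y in (0:ℝ)..(z + d₂),
      ∫ x in (max b₂ (y - z))..d₂, phi x)
      = ∫ z in b₁..d₁, ((b₂ * m₂ + C) * phi z + m₂ * (z * phi z)) := by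
    apply intervalIntegral.integral_congr
    intro z hz
    rw [Set.uIcc_of_le h₁.le] at hz
    have hz0 : 0 ≤ z := le_trans hb₁ hz.1
    dsimp only
    rw [middle b₂ d₂ z hz0 hb₂ h₂.le]
    ring
  rw [key]
  have hint1 : IntervalIntegrable (fun z => (b₂ * m₂ + C) * phi z) volume b₁ d₁ :=
    (continuous_const.mul phi_cont).intervalIntegrable _ _
  have hint2 : IntervalIntegrable (fun z => m₂ * (z * phi z)) volume b₁ d₁ :=
    (continuous_const.mul (continuous_id.mul phi_cont)).intervalIntegrable _ _
  rw [intervalIntegral.integral_add hint1 hint2,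
    intervalIntegral.integral_const_mul, intervalIntegral.integral_const_mul]
  have hzphi : (∫ z in b₁..d₁, z * phi z) = phi b₁ - phi d₁ := by
    have hG : ∀ u ∈ Set.uIcc b₁ d₁, HasDerivAt (fun u => -phi u) (u * phi u) u := by
      intro u _
      have : HasDerivAt (fun u => -phi u) (-(-u * phi u)) u := (hasDerivAt_phi u).neg
      convert this using 1
      ring
    rw [intervalIntegral.integral_eq_sub_of_hasDerivAt hG
      ((continuous_id.mul phi_cont).intervalIntegrable _ _)]
    ring
  rw [hzphi, hC, C_val b₂ d₂, ← hm₂]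
  ring
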